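/- Let T : X → X satisfy ‖Tx − Ty‖ ≤ a · ‖x − Tx‖^α · ‖y − Ty‖^(1−α) for all x, y (a ∈ [0,1), α ∈ (0,1)). Then for the Picard iterates x_n = Tⁿ x_0 one has, for all n ≥ 1 and r ≥ 1, ‖x_n − x_{n+r}‖ ≤ (aⁿ/(1−a)) ‖x_0 − x_1‖. -/

import Mathlib

theorem picard_iterates_cauchy_estimate
    {E : Type*} [NormedAddCommGroup E] [NormedSpace ℝ E]
    (T : E → E) (a α : ℝ) (ha0 : 0 ≤ a) (ha1 : a < 1)
    (hα0 : 0 < α) (hα1 : α < 1)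
    (hT : ∀ x y : E, ‖T x - T y‖ ≤ a * ‖x - T x‖ ^ α * ‖y - T y‖ ^ (1 - α))
    (x₀ : E) :
    ∀ n : ℕ, 1 ≤ n → ∀ r : ℕ, 1 ≤ r →
      ‖T^[n] x₀ - T^[n + r] x₀‖ ≤ (a ^ n / (1 - a)) * ‖x₀ - T x₀‖ := by
  set d : ℕ → ℝ := fun n => ‖T^[n] x₀ - T^[n+1] x₀‖ with hd
  have hdnn : ∀ n, 0 ≤ d n := fun n => norm_nonneg _
  -- key step : d (n+1) ≤ a * d n
  have key : ∀ n, d (n + 1) ≤ a * d n := by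
    intro n
    have h1 : d (n + 1) ≤ a * d n ^ α * d (n + 1) ^ (1 - α) := by
      have := hT (T^[n] x₀) (T^[n+1] x₀)
      simp only [hd]
      simp only [Function.iterate_succ_apply'] at this ⊢
      exact this
    rcases eq_or_lt_of_le ha0 with ha | ha
    · -- a = 0
      have : d (n + 1) ≤ 0 := by
        have := h1
        rw [← ha] at this
        simpa using this
      nlinarith [hdnn n, hdnn (n+1)]
    rcases eq_or_lt_of_le (hdnn (n+1)) with hz | hz
    · rw [← hz]; positivity
    -- now d(n+1) > 0, a > 0
    have hsplit : d (n + 1) = d (n + 1) ^ α * d (n + 1) ^ (1 - α) := by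
      rw [← Real.rpow_add hz]
      simp
    have h2 : d (n + 1) ^ α * d (n + 1) ^ (1 - α) ≤
        (a * d n ^ α) * d (n + 1) ^ (1 - α) := by
      rw [← hsplit]; linarith [h1]
    have hpow : (0:ℝ) < d (n + 1) ^ (1 - α) := Real.rpow_pos_of_pos hz _
    have h3 : d (n + 1) ^ α ≤ a * d n ^ α :=
      le_of_mul_le_mul_right (by linarith [h2]) hpow
    have h4 : (d (n + 1) ^ α) ^ (1/α) ≤ (a * d n ^ α) ^ (1/α) :=
      Real.rpow_le_rpow (Real.rpow_nonneg (hdnn _) _) h3 (by positivity)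
    have hαne : α ≠ 0 := ne_of_gt hα0
    have e1 : (d (n + 1) ^ α) ^ (1/α) = d (n + 1) := by
      rw [← Real.rpow_mul (hdnn _), mul_one_div, div_self hαne, Real.rpow_one]
    have e2 : (a * d n ^ α) ^ (1/α) = a ^ (1/α) * d n := by
      rw [Real.mul_rpow ha0 (Real.rpow_nonneg (hdnn _) _),
        ← Real.rpow_mul (hdnn _)]
      field_simp
      simp
    have e3 : a ^ (1/α) ≤ a := by
      have := Real.rpow_le_rpow_of_exponent_ge ha (le_of_lt ha1)
        (by rw [le_div_iff₀ hα0]; linarith : (1:ℝ) ≤ 1/α)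
      simpa using this
    calc d (n + 1) = (d (n + 1) ^ α) ^ (1/α) := e1.symm
      _ ≤ (a * d n ^ α) ^ (1/α) := h4
      _ = a ^ (1/α) * d n := e2
      _ ≤ a * d n := mul_le_mul_of_nonneg_right e3 (hdnn n)
  -- hence d n ≤ a^n * d 0
  have hgeo : ∀ n, d n ≤ a ^ n * d 0 := by
    intro n
    induction n with
    | zero => simp
    | succ k ih =>
      calc d (k + 1) ≤ a * d k := key k
        _ ≤ a * (a ^ k * d 0) := mul_le_mul_of_nonneg_left ih ha0
        _ = a ^ (k + 1) * d 0 := by ring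
  have hd0 : d 0 = ‖x₀ - T x₀‖ := by simp [hd]
  -- telescoping estimate
  have tele : ∀ n r : ℕ, ‖T^[n] x₀ - T^[n + r] x₀‖ ≤
      ∑ i ∈ Finset.range r, a ^ (n + i) * d 0 := by
    intro n r
    induction r with
    | zero => simp
    | succ k ih =>
      have : ‖T^[n] x₀ - T^[n + (k+1)] x₀‖ ≤
          ‖T^[n] x₀ - T^[n + k] x₀‖ + d (n + k) := by
        have := norm_sub_le_norm_sub_add_norm_sub (T^[n] x₀) (T^[n+k] x₀)
          (T^[n + (k+1)] x₀)
        rw [show d (n + k) = ‖T^[n+k] x₀ - T^[n+(k+1)] x₀‖ from rfl]; exact this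
      calc ‖T^[n] x₀ - T^[n + (k+1)] x₀‖
          ≤ ‖T^[n] x₀ - T^[n + k] x₀‖ + d (n + k) := this
        _ ≤ (∑ i ∈ Finset.range k, a ^ (n + i) * d 0) + a ^ (n + k) * d 0 := by
            exact add_le_add ih (hgeo (n + k))
        _ = ∑ i ∈ Finset.range (k+1), a ^ (n + i) * d 0 := by
            rw [Finset.sum_range_succ]
  intro n _ r _
  have sum_le : (∑ i ∈ Finset.range r, a ^ (n + i) * d 0)
      ≤ (a ^ n / (1 - a)) * d 0 := by
    have h1 : (∑ i ∈ Finset.range r, a ^ (n + i) * d 0)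
        = a ^ n * (∑ i ∈ Finset.range r, a ^ i) * d 0 := by
      simp only [Finset.mul_sum, Finset.sum_mul]
      exact Finset.sum_congr rfl fun i _ => by rw [pow_add]
    rw [h1]
    have h2 : (∑ i ∈ Finset.range r, a ^ i) ≤ 1 / (1 - a) := by
      have hne : a ≠ 1 := ne_of_lt ha1
      have hpos : (0:ℝ) < 1 - a := by linarith
      have e : (a ^ r - 1) / (a - 1) = (1 - a ^ r) / (1 - a) := by
        rw [div_eq_div_iff (by linarith) (by linarith)]; ring
      rw [geom_sum_eq hne, e, div_le_div_iff₀ hpos hpos]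
      nlinarith [pow_nonneg ha0 r]
    have hd0nn := hdnn 0
    have han : (0:ℝ) ≤ a ^ n := pow_nonneg ha0 n
    calc a ^ n * (∑ i ∈ Finset.range r, a ^ i) * d 0
        ≤ a ^ n * (1 / (1 - a)) * d 0 := by
          apply mul_le_mul_of_nonneg_right _ hd0nn
          exact mul_le_mul_of_nonneg_left h2 han
      _ = (a ^ n / (1 - a)) * d 0 := by ring
  rw [← hd0]
  exact le_trans (tele n r) sum_le
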